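/- The kernel K = ker φ is a finitely generated group. -/

import Mathlib

/-- `F₂`, the free group on two generators. -/
abbrev F2 : Type := FreeGroup (Fin 2)

/-- `a`, a free generator of the first factor of `F₂ × F₂`. -/
def a : F2 × F2 := (FreeGroup.of 0, 1)
/-- `b`, a free generator of the first factor of `F₂ × F₂`. -/
def b : F2 × F2 := (FreeGroup.of 1, 1)
/-- `c`, a free generator of the second factor of `F₂ × F₂`. -/
def c : F2 × F2 := (1, FreeGroup.of 0)
/-- `d`, a free generator of the second factor of `F₂ × F₂`. -/
def d : F2 × F2 := (1, FreeGroup.of 1)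


/-- `K = ker φ` is a finitely generated group. -/
theorem stmt_4 (φ : F2 × F2 →* Multiplicative ℤ)
    (ha : φ a = Multiplicative.ofAdd 1) (hb : φ b = Multiplicative.ofAdd 1)
    (hc : φ c = Multiplicative.ofAdd 1) (hd : φ d = Multiplicative.ofAdd 1) :
    Group.FG φ.ker := by
  classical
  set S : Set (F2 × F2) := {a * c⁻¹, b * c⁻¹, d * c⁻¹} with hS
  set H : Subgroup (F2 × F2) := Subgroup.closure S with hH
  have hacH : a * c⁻¹ ∈ H := Subgroup.subset_closure (by simp [hS])
  have hbcH : b * c⁻¹ ∈ H := Subgroup.subset_closure (by simp [hS])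
  have hdcH : d * c⁻¹ ∈ H := Subgroup.subset_closure (by simp [hS])
  have mkzpow : ∀ (x y : F2) (n : ℤ), (((x, y) : F2 × F2)) ^ n = (x ^ n, y ^ n) :=
    fun x y n => Prod.ext (map_zpow (MonoidHom.fst F2 F2) _ _) (map_zpow (MonoidHom.snd F2 F2) _ _)
  set e : F2 × F2 → ℤ := fun w => Multiplicative.toAdd (φ w) with he
  have he_mul : ∀ u v : F2 × F2, e (u * v) = e u + e v := by
    intro u v; simp [he, map_mul]
  have he_inv : ∀ u : F2 × F2, e u⁻¹ = -(e u) := by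
    intro u; simp [he]
  have zp : ∀ (m n : ℤ), (FreeGroup.of 0 : F2) ^ m * FreeGroup.of 0 ^ n
      = FreeGroup.of 0 ^ (m + n) := by
    intro m n; rw [← zpow_add]
  have he_a : e (FreeGroup.of 0, (1 : F2)) = 1 := by
    show e a = 1; simp [he, ha]
  have he_b : e (FreeGroup.of 1, (1 : F2)) = 1 := by
    show e b = 1; simp [he, hb]
  have he_c : e ((1 : F2), FreeGroup.of 0) = 1 := by
    show e c = 1; simp [he, hc]
  have he_d : e ((1 : F2), FreeGroup.of 1) = 1 := by
    show e d = 1; simp [he, hd]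
  -- L1 : (x, C^{-e(x,1)}) ∈ H for every x
  have L1 : ∀ x : F2, ((x, FreeGroup.of 0 ^ (-(e (x, 1)))) : F2 × F2) ∈ H := by
    intro x
    induction x using FreeGroup.induction_on with
    | C1 =>
      convert H.one_mem using 1
      have h0 : e ((1 : F2), (1 : F2)) = 0 := by simp [he, Prod.mk_one_one]
      rw [h0]; simp [Prod.ext_iff]
    | of i =>
      fin_cases i
      · show ((FreeGroup.of 0, FreeGroup.of 0 ^ (-(e (FreeGroup.of 0, (1:F2))))) : F2 × F2) ∈ H
        rw [he_a]
        have : ((FreeGroup.of 0, FreeGroup.of 0 ^ (-(1:ℤ))) : F2 × F2) = a * c⁻¹ := by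
          simp [a, c, Prod.ext_iff]
        rw [this]; exact hacH
      · show ((FreeGroup.of 1, FreeGroup.of 0 ^ (-(e (FreeGroup.of 1, (1:F2))))) : F2 × F2) ∈ H
        rw [he_b]
        have : ((FreeGroup.of 1, FreeGroup.of 0 ^ (-(1:ℤ))) : F2 × F2) = b * c⁻¹ := by
          simp [b, c, Prod.ext_iff]
        rw [this]; exact hbcH
    | inv_of i ih =>
      have hinv : e (((pure i : F2))⁻¹, (1 : F2)) = -(e ((pure i : F2), (1 : F2))) := by
        have h2 : (((pure i : F2))⁻¹, (1 : F2)) = (((pure i : F2), (1 : F2)) : F2 × F2)⁻¹ := by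
          simp [Prod.ext_iff]
        rw [h2, he_inv]
      have h3 : (((pure i : F2))⁻¹, FreeGroup.of 0 ^ (-(e (((pure i : F2))⁻¹, (1 : F2))))) =
          ((((pure i : F2)), FreeGroup.of 0 ^ (-(e ((pure i : F2), (1 : F2))))) : F2 × F2)⁻¹ := by
        rw [hinv]; simp [Prod.ext_iff, zpow_neg]
      erw [h3]; exact H.inv_mem ih
    | mul x y hx hy =>
      have hxy : e ((x * y : F2), (1 : F2)) = e (x, 1) + e (y, 1) := by
        have h2 : ((x * y : F2), (1 : F2)) = ((x, (1 : F2)) : F2 × F2) * (y, 1) := by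
          simp [Prod.ext_iff]
        rw [h2, he_mul]
      have h3 : ((x * y, FreeGroup.of 0 ^ (-(e ((x * y : F2), (1 : F2))))) : F2 × F2)
          = ((x, FreeGroup.of 0 ^ (-(e (x, (1:F2))))) : F2 × F2)
            * (y, FreeGroup.of 0 ^ (-(e (y, (1:F2))))) := by
        rw [hxy, Prod.mk_mul_mk, zp, neg_add]
      rw [h3]; exact H.mul_mem hx hy
  -- Lc : conjugation by powers of C preserves membership of second-factor elements
  have Lc : ∀ (z : F2) (n : ℤ), ((1, z) : F2 × F2) ∈ H →
      ((1, FreeGroup.of 0 ^ n * z * FreeGroup.of 0 ^ (-n)) : F2 × F2) ∈ H := by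
    intro z n hz
    have h1 : ((FreeGroup.of 0 ^ (-n), FreeGroup.of 0 ^ n) : F2 × F2) ∈ H := by
      have h2 := H.zpow_mem hacH (-n)
      have h3 : (a * c⁻¹) ^ (-n)
          = ((FreeGroup.of 0 ^ (-n), FreeGroup.of 0 ^ n) : F2 × F2) := by
        have h4 : a * c⁻¹ = ((FreeGroup.of 0, (FreeGroup.of 0)⁻¹) : F2 × F2) := by
          simp [a, c, Prod.ext_iff]
        rw [h4, mkzpow]; simp [zpow_neg]
      rwa [h3] at h2
    have h5 := H.mul_mem (H.mul_mem h1 hz) (H.inv_mem h1)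
    have h6 : ((FreeGroup.of 0 ^ (-n), FreeGroup.of 0 ^ n) : F2 × F2) * (1, z) *
          ((FreeGroup.of 0 ^ (-n), FreeGroup.of 0 ^ n) : F2 × F2)⁻¹
        = ((1, FreeGroup.of 0 ^ n * z * FreeGroup.of 0 ^ (-n)) : F2 × F2) := by
      simp [Prod.ext_iff, mul_assoc, zpow_neg]
    rwa [h6] at h5
  -- L2 : (1, y * C^{-e(1,y)}) ∈ H for every y
  have L2 : ∀ y : F2, ((1, y * FreeGroup.of 0 ^ (-(e (1, y)))) : F2 × F2) ∈ H := by
    intro y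
    induction y using FreeGroup.induction_on with
    | C1 =>
      convert H.one_mem using 1
      have h0 : e ((1 : F2), (1 : F2)) = 0 := by simp [he, Prod.mk_one_one]
      rw [h0]; simp [Prod.ext_iff]
    | of i =>
      fin_cases i
      · show ((1, FreeGroup.of 0 * FreeGroup.of 0 ^ (-(e ((1:F2), FreeGroup.of 0)))) : F2 × F2) ∈ H
        rw [he_c]
        have : ((1, FreeGroup.of 0 * FreeGroup.of 0 ^ (-(1:ℤ))) : F2 × F2) = 1 := by
          simp [Prod.ext_iff]
        rw [this]; exact H.one_mem
      · show ((1, FreeGroup.of 1 * FreeGroup.of 0 ^ (-(e ((1:F2), FreeGroup.of 1)))) : F2 × F2) ∈ H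
        rw [he_d]
        have : ((1, FreeGroup.of 1 * FreeGroup.of 0 ^ (-(1:ℤ))) : F2 × F2) = d * c⁻¹ := by
          simp [d, c, Prod.ext_iff]
        rw [this]; exact hdcH
    | inv_of i ih =>
      have hinv : e ((1 : F2), ((pure i : F2))⁻¹) = -(e ((1 : F2), (pure i : F2))) := by
        have h2 : ((1 : F2), ((pure i : F2))⁻¹) = (((1 : F2), (pure i : F2)) : F2 × F2)⁻¹ := by
          simp [Prod.ext_iff]
        rw [h2, he_inv]
      have step := Lc _ (-(e ((1 : F2), (pure i : F2)))) (H.inv_mem ih)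
      have h3 : ((1, FreeGroup.of 0 ^ (-(e ((1:F2), (pure i : F2)))) *
            ((1 : F2) * ((pure i : F2) * FreeGroup.of 0 ^ (-(e ((1:F2), (pure i : F2))))))⁻¹ *
            FreeGroup.of 0 ^ (-(-(e ((1:F2), (pure i : F2)))))) : F2 × F2)
          = ((1, ((pure i : F2))⁻¹ *
              FreeGroup.of 0 ^ (-(e ((1:F2), ((pure i : F2))⁻¹)))) : F2 × F2) := by
        rw [hinv]
        simp only [Prod.mk.injEq, true_and, one_mul, neg_neg]
        group
      erw [← h3]
      convert step using 3
      simp [show (pure i : F2) = FreeGroup.of i from rfl]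
    | mul x y hx hy =>
      have hxy : e ((1 : F2), (x * y : F2)) = e (1, x) + e (1, y) := by
        have h2 : ((1 : F2), (x * y : F2)) = (((1:F2), x) : F2 × F2) * (1, y) := by
          simp [Prod.ext_iff]
        rw [h2, he_mul]
      have step := Lc _ (e ((1:F2), x)) hy
      have h4 := H.mul_mem hx step
      have heq : ((1, x * FreeGroup.of 0 ^ (-(e ((1:F2), x)))) : F2 × F2) *
          ((1, FreeGroup.of 0 ^ (e ((1:F2), x)) * (y * FreeGroup.of 0 ^ (-(e ((1:F2), y)))) *
            FreeGroup.of 0 ^ (-(e ((1:F2), x)))) : F2 × F2)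
          = ((1, x * y * FreeGroup.of 0 ^ (-(e ((1:F2), (x * y : F2))))) : F2 × F2) := by
        rw [hxy]
        simp only [Prod.mk_mul_mk, Prod.mk.injEq, one_mul, true_and]
        rw [neg_add, zpow_add]
        group
      rw [← heq]; exact h4
  -- the kernel equals H
  have hker : φ.ker = H := by
    apply le_antisymm
    · intro w hw
      obtain ⟨x, y⟩ := w
      rw [MonoidHom.mem_ker] at hw
      have hw' : e (x, y) = 0 := by simp [he, hw]
      have hsplit : e ((x, y) : F2 × F2) = e (x, 1) + e (1, y) := by
        have h2 : ((x, y) : F2 × F2) = ((x, (1:F2)) : F2 × F2) * (1, y) := by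
          simp [Prod.ext_iff]
        rw [h2, he_mul]
      have hn : e ((1:F2), y) = -(e (x, (1:F2))) := by omega
      have step := Lc _ (e (x, (1:F2))) (L2 y)
      have h4 := H.mul_mem (L1 x) step
      have heq : ((x, FreeGroup.of 0 ^ (-(e (x, (1:F2))))) : F2 × F2) *
          ((1, FreeGroup.of 0 ^ (e (x, (1:F2))) *
            (y * FreeGroup.of 0 ^ (-(e ((1:F2), y)))) *
            FreeGroup.of 0 ^ (-(e (x, (1:F2))))) : F2 × F2)
          = ((x, y) : F2 × F2) := by
        rw [hn]
        simp only [Prod.mk_mul_mk, Prod.mk.injEq, mul_one, neg_neg, true_and]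
        group
      rwa [heq] at h4
    · rw [hH, Subgroup.closure_le]
      rintro w (rfl | rfl | rfl) <;>
        simp [MonoidHom.mem_ker, map_mul, map_inv, ha, hb, hc, hd]
  rw [hker, hH]
  refine (Group.fg_iff_subgroup_fg _).mpr ?_
  rw [Subgroup.fg_iff]
  exact ⟨S, rfl, Set.toFinite S⟩
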